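/- If u : B_R → ℝ is C¹ on the open ball B_R ⊂ ℝ^N and satisfies (i) the radial derivative ∂u/∂r(x) = ⟨∇u(x), x/|x|⟩ → ∞ as |x| → R, and (ii) the tangential gradient satisfies |∇u(x) − (∂u/∂r)(x) x/|x|| = o(∂u/∂r(x)) as |x| → R, then for every boundary point P with P₁ > 0 (first coordinate positive) there exists δ > 0 such that ∂u/∂x₁ > 0 on B_R ∩ B_δ(P). -/

import Mathlib

theorem stmt13 (N : ℕ) (hN : 2 ≤ N) (R : ℝ) (hR : 0 < R)
    (u : EuclideanSpace ℝ (Fin N) → ℝ)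
    (hu : ContDiffOn ℝ 1 u (Metric.ball 0 R))
    (ρ : EuclideanSpace ℝ (Fin N) → ℝ)
    (hρ : ρ = fun x => (inner ℝ (gradient u x) (‖x‖⁻¹ • x) : ℝ))
    (T : EuclideanSpace ℝ (Fin N) → EuclideanSpace ℝ (Fin N))
    (hT : T = fun x => gradient u x - ρ x • (‖x‖⁻¹ • x))
    (hrad : Filter.Tendsto ρ
      ((Filter.comap (fun x : EuclideanSpace ℝ (Fin N) => ‖x‖)
        (nhdsWithin R (Set.Iio R))) ⊓ Filter.principal (Metric.ball 0 R))
      Filter.atTop)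
    (htan : Filter.Tendsto (fun x => ‖T x‖ / ρ x)
      ((Filter.comap (fun x : EuclideanSpace ℝ (Fin N) => ‖x‖)
        (nhdsWithin R (Set.Iio R))) ⊓ Filter.principal (Metric.ball 0 R))
      (nhds 0)) :
    ∀ P : EuclideanSpace ℝ (Fin N), ‖P‖ = R → 0 < P ⟨0, by omega⟩ →
      ∃ δ > 0, ∀ x ∈ Metric.ball (0 : EuclideanSpace ℝ (Fin N)) R ∩ Metric.ball P δ,
        0 < fderiv ℝ u x (EuclideanSpace.single ⟨0, by omega⟩ 1) := by
  intro P hP hP1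
  set i0 : Fin N := ⟨0, by omega⟩ with hi0
  set c : ℝ := P i0 / (2 * R) with hc
  have hc0 : 0 < c := div_pos hP1 (by linarith)
  have hev : ∀ᶠ x in ((Filter.comap (fun x : EuclideanSpace ℝ (Fin N) => ‖x‖)
      (nhdsWithin R (Set.Iio R))) ⊓ Filter.principal (Metric.ball 0 R)),
      0 < ρ x ∧ ‖T x‖ < (c / 2) * ρ x := by
    have h1 := hrad.eventually_gt_atTop 0
    have h2 : ∀ᶠ x in ((Filter.comap (fun x : EuclideanSpace ℝ (Fin N) => ‖x‖)
        (nhdsWithin R (Set.Iio R))) ⊓ Filter.principal (Metric.ball 0 R)),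
        ‖T x‖ / ρ x < c / 2 :=
      htan.eventually (eventually_lt_nhds (by linarith : (0:ℝ) < c / 2))
    filter_upwards [h1, h2] with x hx1 hx2
    exact ⟨hx1, (div_lt_iff₀ hx1).mp hx2⟩
  rw [Filter.eventually_inf_principal, Filter.eventually_comap] at hev
  obtain ⟨a, haR, ha⟩ := mem_nhdsLT_iff_exists_Ioo_subset.mp hev
  have haR' : a < R := haR
  refine ⟨min (R - a) (P i0 / 2), lt_min (by linarith) (by linarith), ?_⟩
  intro x hx
  obtain ⟨hxball, hxP⟩ := hx
  have hxR : ‖x‖ < R := by simpa [Metric.mem_ball] using hxball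
  have hdist : ‖x - P‖ < min (R - a) (P i0 / 2) := by
    simpa [dist_eq_norm] using hxP
  have hcoord : |x i0 - P i0| ≤ ‖x - P‖ := by
    have h1 : (inner ℝ (x - P) (EuclideanSpace.single i0 (1:ℝ)) : ℝ) = x i0 - P i0 := by
      simp [EuclideanSpace.inner_single_right]
    have h2 := abs_real_inner_le_norm (x - P) (EuclideanSpace.single i0 (1:ℝ))
    rw [h1, EuclideanSpace.norm_single] at h2
    simpa using h2
  have hxi0 : P i0 / 2 ≤ x i0 := by
    have h3 : |x i0 - P i0| < P i0 / 2 :=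
      lt_of_le_of_lt hcoord (lt_of_lt_of_le hdist (min_le_right _ _))
    have h4 := abs_lt.mp h3
    linarith [h4.1]
  have hxpos : 0 < x i0 := lt_of_lt_of_le (by linarith) hxi0
  have hxnorm_lb : a < ‖x‖ := by
    have h1 : ‖P‖ - ‖x‖ ≤ ‖x - P‖ := by
      have h5 := norm_sub_norm_le P x
      rw [show P - x = -(x - P) by rw [neg_sub], norm_neg] at h5
      linarith
    have h2 : ‖x - P‖ < R - a := lt_of_lt_of_le hdist (min_le_left _ _)
    rw [hP] at h1; linarith
  have hxnorm_pos : 0 < ‖x‖ := norm_pos_iff.mpr (by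
    intro h; rw [h] at hxpos; simp at hxpos)
  obtain ⟨hρpos, hTlt⟩ := ha ⟨hxnorm_lb, hxR⟩ x rfl hxball
  have hgrad : fderiv ℝ u x (EuclideanSpace.single i0 (1:ℝ))
      = (inner ℝ (gradient u x) (EuclideanSpace.single i0 (1:ℝ)) : ℝ) := by
    rw [gradient, InnerProductSpace.toDual_symm_apply]
  have hdecomp : gradient u x = ρ x • (‖x‖⁻¹ • x) + T x := by
    rw [hT]; module
  have hTi : (inner ℝ (T x) (EuclideanSpace.single i0 (1:ℝ)) : ℝ) = T x i0 := by
    simp [EuclideanSpace.inner_single_right]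
  have hTbound : |T x i0| ≤ ‖T x‖ := by
    have h2 := abs_real_inner_le_norm (T x) (EuclideanSpace.single i0 (1:ℝ))
    rw [hTi, EuclideanSpace.norm_single] at h2
    simpa using h2
  have hinnerrad : (inner ℝ (ρ x • (‖x‖⁻¹ • x)) (EuclideanSpace.single i0 (1:ℝ)) : ℝ)
      = ρ x * (‖x‖⁻¹ * x i0) := by
    rw [real_inner_smul_left, real_inner_smul_left]
    simp [EuclideanSpace.inner_single_right]
  have hfrac : c ≤ ‖x‖⁻¹ * x i0 := by
    rw [hc, div_le_iff₀ (by linarith)]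
    have h3 : ‖x‖⁻¹ * (2 * ‖x‖) = 2 := by field_simp
    calc P i0 = (P i0 / 2) * 2 := by ring
      _ ≤ x i0 * (‖x‖⁻¹ * (2 * R)) := by
          apply mul_le_mul hxi0 ?_ (by norm_num) (by linarith)
          have h4 : ‖x‖⁻¹ * (2 * ‖x‖) ≤ ‖x‖⁻¹ * (2 * R) :=
            mul_le_mul_of_nonneg_left (by linarith) (by positivity)
          linarith
      _ = ‖x‖⁻¹ * x i0 * (2 * R) := by ring
  rw [hgrad, hdecomp, inner_add_left, hinnerrad, hTi]
  have h6 := mul_le_mul_of_nonneg_left hfrac (le_of_lt hρpos)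
  have h7 := (abs_le.mp hTbound).1
  nlinarith
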